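/- There is a quantum strategy winning the CHSH game with probability cos²(π/8): for the shared EPR state |ψ⟩ = (|00⟩+|11⟩)/√2, with Alice measuring σ_z on input 0 and σ_x on input 1, and Bob measuring (σ_z + (−1)^b σ_x)/√2 on input b, the probability that the outcomes x, y satisfy x XOR y = a AND b equals cos²(π/8) for every input pair (a,b). -/
import Mathlib


open Matrix

noncomputable section

/-- Pauli σ_z. -/
def pauliZ : Matrix (Fin 2) (Fin 2) ℂ := !![1, 0; 0, -1]

/-- Pauli σ_x. -/
def pauliX : Matrix (Fin 2) (Fin 2) ℂ := !![0, 1; 1, 0]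

/-- Alice's observable: σ_z on input 0 (`false`), σ_x on input 1 (`true`). -/
def chshAliceObs (a : Bool) : Matrix (Fin 2) (Fin 2) ℂ :=
  if a then pauliX else pauliZ

/-- Bob's observable `(σ_z + (−1)^b σ_x)/√2` on input `b`. -/
def chshBobObs (b : Bool) : Matrix (Fin 2) (Fin 2) ℂ :=
  (((Real.sqrt 2)⁻¹ : ℝ) : ℂ) • (pauliZ + (if b then (-1 : ℂ) else 1) • pauliX)

/-- Spectral projection of a ±1-valued observable `M` (with `M² = 1`) onto the
eigenvalue `+1` for outcome bit `false`, and `−1` for outcome bit `true`. -/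
def outcomeProj (M : Matrix (Fin 2) (Fin 2) ℂ) (x : Bool) :
    Matrix (Fin 2) (Fin 2) ℂ :=
  ((2 : ℂ))⁻¹ • (1 + (if x then (-1 : ℂ) else 1) • M)

/-- The EPR state `(|00⟩ + |11⟩)/√2` as a vector on `Fin 2 × Fin 2`. -/
def eprVec : Fin 2 × Fin 2 → ℂ :=
  fun p => if p.1 = p.2 then (((Real.sqrt 2)⁻¹ : ℝ) : ℂ) else 0

end

lemma cos_sq_pi_div_eight : (Real.cos (Real.pi / 8))^2 = (2 + Real.sqrt 2) / 4 := by
  have h := Real.cos_sq (Real.pi / 8)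
  have h2 : 2 * (Real.pi / 8) = Real.pi / 4 := by ring
  rw [h2, Real.cos_pi_div_four] at h
  rw [h]; ring

set_option maxHeartbeats 1600000 in

/-- The standard quantum strategy for the CHSH game (EPR state, Alice measuring
σ_z or σ_x, Bob measuring `(σ_z ± σ_x)/√2`) wins with probability
`cos²(π/8)` on every input pair `(a,b)`: the total probability of outcomes
`(x,y)` with `x ⊕ y = a ∧ b` equals `cos²(π/8)`. -/
theorem chsh_quantum_value (a b : Bool) :
    ∑ x : Bool, ∑ y : Bool,
      (if xor x y = (a && b) then
        ∑ i : Fin 2 × Fin 2, (starRingEnd ℂ) (eprVec i) *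
          ((Matrix.kronecker (outcomeProj (chshAliceObs a) x)
            (outcomeProj (chshBobObs b) y)).mulVec eprVec) i
      else 0)
    = (((Real.cos (Real.pi / 8))^2 : ℝ) : ℂ) := by
  have hs : ((Real.sqrt 2 : ℝ) : ℂ)^2 = 2 := by
    norm_cast
    exact Real.sq_sqrt (by norm_num)
  have hs0 : ((Real.sqrt 2 : ℝ) : ℂ) ≠ 0 := by
    intro h
    rw [h] at hs; norm_num at hs
  have h3 : ((Real.sqrt 2 : ℝ) : ℂ)^3 = 2 * ((Real.sqrt 2 : ℝ) : ℂ) := by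
    rw [show ((Real.sqrt 2:ℝ):ℂ)^3 = ((Real.sqrt 2:ℝ):ℂ)^2 * ((Real.sqrt 2:ℝ):ℂ) by ring, hs]
  have h4 : ((Real.sqrt 2 : ℝ) : ℂ)^4 = 4 := by
    rw [show ((Real.sqrt 2:ℝ):ℂ)^4 = (((Real.sqrt 2:ℝ):ℂ)^2)^2 by ring, hs]; norm_num
  have hinv : ((Real.sqrt 2 : ℝ) : ℂ)⁻¹ = ((Real.sqrt 2 : ℝ) : ℂ) / 2 := by
    field_simp
    linear_combination -hs
  rw [cos_sq_pi_div_eight]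
  push_cast
  rcases a <;> rcases b <;>
  · simp only [chshAliceObs, chshBobObs, outcomeProj, eprVec, pauliX, pauliZ,
      Fintype.sum_bool, Fintype.sum_prod_type, Fin.sum_univ_two,
      Matrix.kronecker_apply, Matrix.mulVec, dotProduct,
      Matrix.smul_apply, Matrix.add_apply, Matrix.one_apply,
      Matrix.cons_val_zero, Matrix.cons_val_one, Matrix.head_cons,
      Bool.xor_false, Bool.xor_true, Bool.and_self, Bool.and_false, Bool.false_and,
      Bool.true_and, Bool.and_true,
      if_true, if_false, Complex.conj_ofReal, smul_eq_mul]
    norm_num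
    simp only [hinv]
    ring_nf
    simp only [h3, h4, hs]
    ring_nf
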